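/- For every n ≥ 2 and every complex number c, there exists an invertible n × n complex matrix E such that Tr(E · (E^T)^{-1}) = c. -/

import Mathlib

open Matrix

lemma std_transpose {n : ℕ} (i j : Fin n) (c : ℂ) :
    (single i j c)ᵀ = single j i c := by
  ext a b
  simp [single, and_comm]

set_option maxHeartbeats 1000000 in
/-- For every `n ≥ 2` and every `c ∈ ℂ` there is an invertible `n × n`
complex matrix `E` with `Tr (E * (Eᵀ)⁻¹) = c`. -/
theorem stmt_10 (n : ℕ) (hn : 2 ≤ n) (c : ℂ) :
    ∃ E : Matrix (Fin n) (Fin n) ℂ, IsUnit E ∧ (E * (Eᵀ)⁻¹).trace = c := by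
  obtain ⟨a, ha⟩ := IsAlgClosed.exists_pow_nat_eq ((n : ℂ) - c) (n := 2) zero_lt_two
  have h0 : (0 : ℕ) < n := by omega
  have h1 : (1 : ℕ) < n := by omega
  set i0 : Fin n := ⟨0, h0⟩
  set i1 : Fin n := ⟨1, h1⟩
  have hne : i0 ≠ i1 := by simp [i0, i1, Fin.ext_iff]
  set A : Matrix (Fin n) (Fin n) ℂ := single i0 i1 a with hA
  set B : Matrix (Fin n) (Fin n) ℂ := single i1 i0 a with hB
  set E : Matrix (Fin n) (Fin n) ℂ := 1 + A with hE
  have hBB : B * B = 0 := single_mul_single_of_ne (c := a) _ _ _ hne _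
  have hAB : A * B = single i0 i0 (a * a) := single_mul_single_same (c := a) _ _ _ _
  have hET : Eᵀ = 1 + B := by
    rw [hE, transpose_add, transpose_one, std_transpose]
  have hinv : Eᵀ * (1 - B) = 1 := by
    rw [hET]
    rw [mul_sub, mul_one, add_mul, one_mul, hBB, add_zero, add_sub_cancel_right]
  have hinv' : (Eᵀ)⁻¹ = 1 - B := inv_eq_right_inv hinv
  have hEinv : E * (1 - B) = 1 + A - B - single i0 i0 (a * a) := by
    rw [hE, mul_sub, mul_one, add_mul, one_mul, hAB]
    abel
  refine ⟨E, ?_, ?_⟩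
  · have hdet : Eᵀ.det * (1 - B).det = 1 := by rw [← det_mul, hinv, det_one]
    rw [det_transpose] at hdet
    exact (isUnit_iff_isUnit_det E).2 (IsUnit.of_mul_eq_one _ hdet)
  · rw [hinv', hEinv, trace_sub, trace_sub, trace_add, trace_one,
      trace_single_eq_of_ne (h := hne.symm), trace_single_eq_of_ne (h := hne),
      trace_single_eq_same]
    have : a * a = (n : ℂ) - c := by rw [← ha]; ring
    rw [this]
    simp only [Fintype.card_fin]
    ring
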